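/- The modified Bessel function of the first kind of order zero, I₀(x) = ∑_{n=0}^∞ x²ⁿ / (2²ⁿ (n!)²), is well defined (the series converges for every x ∈ ℝ), is twice differentiable, and satisfies the modified Bessel equation of order zero: x I₀''(x) + I₀'(x) − x I₀(x) = 0 for all x ∈ ℝ. -/

import Mathlib

open Metric

/-- The modified Bessel function of the first kind of order zero,
`I₀(x) = ∑ x²ⁿ / (2²ⁿ (n!)²)`. -/
noncomputable def besselI0 (x : ℝ) : ℝ :=
  ∑' n : ℕ, x ^ (2 * n) / (2 ^ (2 * n) * ((n.factorial : ℝ)) ^ 2)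

/-- term of the series -/
noncomputable def bI0 (n : ℕ) (x : ℝ) : ℝ :=
  x ^ (2 * n) / (2 ^ (2 * n) * ((n.factorial : ℝ)) ^ 2)

/-- first derivative term -/
noncomputable def bI1 (n : ℕ) (x : ℝ) : ℝ :=
  ((2 * n : ℕ) : ℝ) * x ^ (2 * n - 1) / (2 ^ (2 * n) * ((n.factorial : ℝ)) ^ 2)

/-- second derivative term -/
noncomputable def bI2 (n : ℕ) (x : ℝ) : ℝ :=
  ((2 * n : ℕ) : ℝ) * (((2 * n - 1 : ℕ) : ℝ) * x ^ (2 * n - 1 - 1)) /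
    (2 ^ (2 * n) * ((n.factorial : ℝ)) ^ 2)

lemma bI0_hasDerivAt (n : ℕ) (x : ℝ) : HasDerivAt (bI0 n) (bI1 n x) x := by
  unfold bI0 bI1
  simpa [bI0, bI1] using
    (hasDerivAt_pow (2 * n) x).div_const (2 ^ (2 * n) * ((n.factorial : ℝ)) ^ 2)

lemma bI1_hasDerivAt (n : ℕ) (x : ℝ) : HasDerivAt (bI1 n) (bI2 n x) x := by
  unfold bI1 bI2
  exact (((hasDerivAt_pow (2 * n - 1) x).const_mul ((2 * n : ℕ) : ℝ)).div_const
      (2 ^ (2 * n) * ((n.factorial : ℝ)) ^ 2))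

lemma fact_pos (n : ℕ) : (0 : ℝ) < (n.factorial : ℝ) := by
  exact_mod_cast n.factorial_pos

lemma nat_num_le (n : ℕ) : ((2 * n : ℕ) : ℝ) * ((2 * n - 1 : ℕ) : ℝ) ≤ 4 * 4 ^ n := by
  have h : (2 * n) * (2 * n - 1) ≤ 4 * 4 ^ n := by
    have h2 : n ≤ 2 ^ n := (Nat.lt_two_pow_self (n := n)).le
    calc (2 * n) * (2 * n - 1) ≤ (2 * n) * (2 * n) := Nat.mul_le_mul_left _ (Nat.sub_le _ _)
      _ ≤ (2 * 2 ^ n) * (2 * 2 ^ n) := Nat.mul_le_mul (by omega) (by omega)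
      _ = 4 * 4 ^ n := by rw [show (4:ℕ) = 2 * 2 from rfl, mul_pow]; ring
  exact_mod_cast h

lemma nat_num_le' (n : ℕ) : ((2 * n : ℕ) : ℝ) ≤ 4 * 4 ^ n := by
  have h : 2 * n ≤ 4 * 4 ^ n := by
    have h2 : n < 2 ^ n := Nat.lt_two_pow_self (n := n)
    have : 2 ^ n ≤ 4 ^ n := Nat.pow_le_pow_left (by norm_num) n
    omega
  exact_mod_cast h

lemma pow_abs_le {R y : ℝ} (hR : 1 ≤ R) (hy : |y| ≤ R) (k n : ℕ) (hk : k ≤ 2 * n) :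
    |y| ^ k ≤ R ^ (2 * n) := by
  calc |y| ^ k ≤ R ^ k := pow_le_pow_left₀ (abs_nonneg y) hy k
    _ ≤ R ^ (2 * n) := pow_le_pow_right₀ hR hk

lemma denom_le (n : ℕ) : (4 : ℝ) ^ n * n.factorial ≤ 2 ^ (2 * n) * ((n.factorial : ℝ)) ^ 2 := by
  have h2 : (2 : ℝ) ^ (2 * n) = 4 ^ n := by
    rw [pow_mul]; norm_num
  rw [h2]
  have h1 : (1 : ℝ) ≤ n.factorial := by exact_mod_cast n.factorial_pos
  have key : ((n.factorial : ℝ)) ≤ ((n.factorial : ℝ)) ^ 2 := by nlinarith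
  exact mul_le_mul_of_nonneg_left key (by positivity)

lemma key_div_eq (n : ℕ) (R : ℝ) :
    (4 * 4 ^ n * R ^ (2 * n)) / (4 ^ n * (n.factorial : ℝ)) = 4 * (R ^ 2) ^ n / n.factorial := by
  have h4 : (4 : ℝ) ^ n ≠ 0 := by positivity
  have hf : ((n.factorial : ℝ)) ≠ 0 := (fact_pos n).ne'
  rw [pow_mul]
  field_simp

lemma bI1_bound {R : ℝ} (hR : 1 ≤ R) (n : ℕ) {y : ℝ} (hy : |y| ≤ R) :
    ‖bI1 n y‖ ≤ 4 * (R ^ 2) ^ n / n.factorial := by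
  have hd : (0 : ℝ) < 2 ^ (2 * n) * ((n.factorial : ℝ)) ^ 2 := by positivity
  rw [bI1, Real.norm_eq_abs, abs_div, abs_of_pos hd, abs_mul, abs_pow,
    Nat.abs_cast]
  rw [← key_div_eq n R]
  apply div_le_div₀ (by positivity) ?_ (by positivity) (denom_le n)
  have h1 := nat_num_le' n
  have h2 := pow_abs_le hR hy (2 * n - 1) n (Nat.sub_le _ _)
  have h3 : (0 : ℝ) ≤ ((2 * n : ℕ) : ℝ) := by positivity
  calc ((2 * n : ℕ) : ℝ) * |y| ^ (2 * n - 1) ≤ (4 * 4 ^ n) * R ^ (2 * n) :=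
    mul_le_mul h1 h2 (by positivity) (by positivity)
    _ = 4 * 4 ^ n * R ^ (2 * n) := by ring

lemma bI2_bound {R : ℝ} (hR : 1 ≤ R) (n : ℕ) {y : ℝ} (hy : |y| ≤ R) :
    ‖bI2 n y‖ ≤ 4 * (R ^ 2) ^ n / n.factorial := by
  have hd : (0 : ℝ) < 2 ^ (2 * n) * ((n.factorial : ℝ)) ^ 2 := by positivity
  rw [bI2, Real.norm_eq_abs, abs_div, abs_of_pos hd, abs_mul, abs_mul, abs_pow,
    Nat.abs_cast, Nat.abs_cast]
  rw [← key_div_eq n R]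
  apply div_le_div₀ (by positivity) ?_ (by positivity) (denom_le n)
  have h1 := nat_num_le n
  have h2 := pow_abs_le hR hy (2 * n - 1 - 1) n (by omega)
  calc ((2 * n : ℕ) : ℝ) * (((2 * n - 1 : ℕ) : ℝ) * |y| ^ (2 * n - 1 - 1))
      = (((2 * n : ℕ) : ℝ) * ((2 * n - 1 : ℕ) : ℝ)) * |y| ^ (2 * n - 1 - 1) := by ring
    _ ≤ (4 * 4 ^ n) * R ^ (2 * n) :=
        mul_le_mul h1 h2 (by positivity) (by positivity)
    _ = 4 * 4 ^ n * R ^ (2 * n) := by ring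

lemma u_summable (R : ℝ) : Summable fun n : ℕ => 4 * (R ^ 2) ^ n / (n.factorial : ℝ) := by
  simpa [mul_div_assoc] using (Real.summable_pow_div_factorial (R ^ 2)).mul_left 4

lemma bI0_summable (x : ℝ) : Summable fun n : ℕ => bI0 n x := by
  apply Summable.of_norm_bounded (Real.summable_pow_div_factorial (x ^ 2))
  intro n
  have hd : (0 : ℝ) < 2 ^ (2 * n) * ((n.factorial : ℝ)) ^ 2 := by positivity
  rw [bI0, Real.norm_eq_abs, abs_div, abs_of_pos hd, abs_pow]
  have h2 : (2 : ℝ) ^ (2 * n) = 4 ^ n := by rw [pow_mul]; norm_num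
  apply div_le_div₀ (by positivity) ?_ (by positivity) ?_
  · rw [pow_mul]; exact pow_le_pow_left₀ (by positivity) (by nlinarith [abs_nonneg x, sq_abs x]) n
  · rw [h2]
    have h1 : (1 : ℝ) ≤ n.factorial := by exact_mod_cast n.factorial_pos
    have h4 : (1 : ℝ) ≤ 4 ^ n := by simpa using pow_le_pow_left₀ (by norm_num : (0:ℝ) ≤ 1) (by norm_num : (1:ℝ) ≤ 4) n
    nlinarith

lemma bI1_zero (n : ℕ) : bI1 n 0 = 0 := by
  rcases n with _ | n
  · simp [bI1]
  · simp [bI1, Nat.mul_succ]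

lemma ball_mem_abs {R x : ℝ} : x ∈ Metric.ball (0 : ℝ) R ↔ |x| < R := by
  simp [Metric.mem_ball, Real.dist_eq]

lemma besselI0_hasDerivAt (x : ℝ) : HasDerivAt besselI0 (∑' n, bI1 n x) x := by
  set R := |x| + 1 with hRdef
  have hR : 1 ≤ R := by rw [hRdef]; have := abs_nonneg x; linarith
  have hx : x ∈ Metric.ball (0 : ℝ) R := ball_mem_abs.mpr (by simp [hRdef])
  have h0 : (0 : ℝ) ∈ Metric.ball (0 : ℝ) R := ball_mem_abs.mpr (by simp [hRdef]; positivity)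
  have hb : besselI0 = fun z => ∑' n, bI0 n z := by unfold besselI0 bI0; rfl
  rw [hb]
  exact hasDerivAt_tsum_of_isPreconnected (u_summable R) Metric.isOpen_ball
    (convex_ball (0:ℝ) R).isPreconnected
    (fun n y _ => bI0_hasDerivAt n y)
    (fun n y hy => bI1_bound hR n (ball_mem_abs.mp hy).le)
    h0 (bI0_summable 0) hx

lemma deriv_besselI0_eq (x : ℝ) : deriv besselI0 x = ∑' n, bI1 n x :=
  (besselI0_hasDerivAt x).deriv

lemma besselI1_hasDerivAt (x : ℝ) :
    HasDerivAt (fun z => ∑' n, bI1 n z) (∑' n, bI2 n x) x := by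
  set R := |x| + 1 with hRdef
  have hR : 1 ≤ R := by rw [hRdef]; have := abs_nonneg x; linarith
  have hx : x ∈ Metric.ball (0 : ℝ) R := ball_mem_abs.mpr (by simp [hRdef])
  have h0 : (0 : ℝ) ∈ Metric.ball (0 : ℝ) R := ball_mem_abs.mpr (by simp [hRdef]; positivity)
  exact hasDerivAt_tsum_of_isPreconnected (u_summable R) Metric.isOpen_ball
    (convex_ball (0:ℝ) R).isPreconnected
    (fun n y _ => bI1_hasDerivAt n y)
    (fun n y hy => bI2_bound hR n (ball_mem_abs.mp hy).le)
    h0 (by simp only [bI1_zero]; exact summable_zero) hx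

lemma deriv2_besselI0_hasDerivAt (x : ℝ) :
    HasDerivAt (deriv besselI0) (∑' n, bI2 n x) x := by
  have : deriv besselI0 = fun z => ∑' n, bI1 n z := funext deriv_besselI0_eq
  rw [this]
  exact besselI1_hasDerivAt x

lemma bI1_summable (x : ℝ) : Summable fun n => bI1 n x :=
  (u_summable (|x| + 1)).of_norm_bounded fun n =>
    bI1_bound (le_add_of_nonneg_left (abs_nonneg x)) n (le_add_of_nonneg_right zero_le_one)

lemma bI2_summable (x : ℝ) : Summable fun n => bI2 n x :=
  (u_summable (|x| + 1)).of_norm_bounded fun n =>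
    bI2_bound (le_add_of_nonneg_left (abs_nonneg x)) n (le_add_of_nonneg_right zero_le_one)

lemma combine_term (x : ℝ) (n : ℕ) : x * bI2 (n + 1) x + bI1 (n + 1) x = x * bI0 n x := by
  have h1 : 2 * (n + 1) - 1 = 2 * n + 1 := by omega
  have h2 : 2 * (n + 1) - 1 - 1 = 2 * n := by omega
  rw [bI2, bI1, bI0, h2, h1]
  have hf : ((n.factorial : ℝ)) ≠ 0 := (fact_pos n).ne'
  have h2n : (2 : ℝ) ^ (2 * (n + 1)) = 4 * 2 ^ (2 * n) := by
    rw [Nat.mul_succ, pow_add]; ring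
  rw [h2n]
  push_cast [Nat.factorial_succ]
  have h2p : (2 : ℝ) ^ (2 * n) ≠ 0 := by positivity
  field_simp
  ring

lemma combine_zero (x : ℝ) : x * bI2 0 x + bI1 0 x = 0 := by
  simp [bI2, bI1]

/-- `I₀` is well defined (its defining series converges for every `x ∈ ℝ`), is twice
differentiable, and satisfies the modified Bessel equation of order zero:
`x I₀''(x) + I₀'(x) − x I₀(x) = 0` for all `x ∈ ℝ`. -/
theorem besselI0_wellDefined_and_ode :
    (∀ x : ℝ, Summable fun n : ℕ =>
      x ^ (2 * n) / (2 ^ (2 * n) * ((n.factorial : ℝ)) ^ 2)) ∧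
    Differentiable ℝ besselI0 ∧
    Differentiable ℝ (deriv besselI0) ∧
    (∀ x : ℝ,
      x * deriv (deriv besselI0) x + deriv besselI0 x - x * besselI0 x = 0) := by
  refine ⟨fun x => bI0_summable x, fun x => (besselI0_hasDerivAt x).differentiableAt,
    fun x => (deriv2_besselI0_hasDerivAt x).differentiableAt, fun x => ?_⟩
  have hd1 : deriv besselI0 x = ∑' n, bI1 n x := deriv_besselI0_eq x
  have hd2 : deriv (deriv besselI0) x = ∑' n, bI2 n x := (deriv2_besselI0_hasDerivAt x).deriv
  have hb : besselI0 x = ∑' n, bI0 n x := by unfold besselI0 bI0; rfl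
  rw [hd1, hd2, hb]
  -- combined series
  have hS : HasSum (fun n => x * bI2 n x + bI1 n x)
      (x * (∑' n, bI2 n x) + ∑' n, bI1 n x) :=
    ((bI2_summable x).hasSum.mul_left x).add (bI1_summable x).hasSum
  have hS' : HasSum (fun n => x * bI2 n x + bI1 n x) (x * ∑' n, bI0 n x) := by
    have hshift : HasSum (fun n => x * bI2 (n + 1) x + bI1 (n + 1) x)
        (x * ∑' n, bI0 n x) := by
      have := ((bI0_summable x).hasSum.mul_left x)
      exact this.congr_fun fun n => combine_term x n
    have := (hasSum_nat_add_iff (f := fun n => x * bI2 n x + bI1 n x) 1).mp hshift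
    simpa [combine_zero x] using this
  have := hS.unique hS'
  linarith
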